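/- The inversion R is an involution: for every (x,t) ∈ ℋ with (x,t) ≠ (0,0), one has R(x,t) ≠ (0,0) and R(R(x,t)) = (x,t). -/

import Mathlib

open scoped BigOperators
open Matrix

noncomputable section

namespace OC

/-- Octonions, identified with ℝ⁸. -/
abbrev Octo : Type := Fin 8 → ℝ

/-- The seven positively-oriented triples Ω. -/
def OmegaT : List (Fin 8 × Fin 8 × Fin 8) :=
  [(1,2,3),(2,4,6),(4,3,5),(3,6,7),(6,5,1),(5,7,2),(7,1,4)]

/-- The six permutations of a triple, with their signs. -/
def signedPerms3 (t : Fin 8 × Fin 8 × Fin 8) : List (ℝ × (Fin 8 × Fin 8 × Fin 8)) :=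
  [(1,(t.1,t.2.1,t.2.2)), (1,(t.2.1,t.2.2,t.1)), (1,(t.2.2,t.1,t.2.1)),
   (-1,(t.2.1,t.1,t.2.2)), (-1,(t.1,t.2.2,t.2.1)), (-1,(t.2.2,t.2.1,t.1))]

/-- The totally antisymmetric symbol ε with ε(α,β,γ) = 1 on Ω and vanishing on triples
that are not permutations of a triple of Ω. -/
def eps (a b c : Fin 8) : ℝ :=
  (((OmegaT.map signedPerms3).flatten).map (fun p => if p.2 = (a,b,c) then p.1 else 0)).sum

/-- Coefficient of `e d` in the product `e a * e b`: `e 0` is a two-sided unit and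
`e α * e β = -δ_{αβ} e 0 + ∑ γ, ε(α,β,γ) e γ` for imaginary indices. -/
def mulCoef (a b d : Fin 8) : ℝ :=
  if a = 0 then (if d = b then 1 else 0)
  else if b = 0 then (if d = a then 1 else 0)
  else (if a = b ∧ d = 0 then -1 else 0) + eps a b d

/-- Octonion multiplication on ℝ⁸. -/
def omul (x y : Octo) : Octo := fun d => ∑ a, ∑ b, x a * y b * mulCoef a b d

/-- The standard basis octonions e₀,…,e₇. -/
def e (a : Fin 8) : Octo := fun d => if d = a then 1 else 0

/-- Real part. -/
def reO (x : Octo) : ℝ := x 0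

/-- Imaginary part. -/
def imO (x : Octo) : Octo := fun d => if d = 0 then 0 else x d

/-- Octonion conjugation. -/
def conjO (x : Octo) : Octo := fun d => if d = 0 then x 0 else -x d

/-- Squared Euclidean norm |x|². -/
def normSq (x : Octo) : ℝ := ∑ a, (x a)^2

/-- Inverse of a nonzero octonion, q⁻¹ = q̄ / |q|². -/
def oinv (q : Octo) : Octo := (normSq q)⁻¹ • conjO q

/-- The seven quadruples Λ. -/
def LambdaT : List (Fin 8 × Fin 8 × Fin 8 × Fin 8) :=
  [(5,4,6,7),(7,3,5,1),(1,6,7,2),(2,5,1,4),(4,7,2,3),(3,1,4,6),(6,2,5,3)]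

/-- The 24 permutations of a quadruple, with their signs. -/
def signedPerms4 (t : Fin 8 × Fin 8 × Fin 8 × Fin 8) :
    List (ℝ × (Fin 8 × Fin 8 × Fin 8 × Fin 8)) :=
  let a := t.1; let b := t.2.1; let c := t.2.2.1; let d := t.2.2.2
  [ (1,(a,b,c,d)), (-1,(a,b,d,c)), (-1,(a,c,b,d)), (1,(a,c,d,b)), (1,(a,d,b,c)), (-1,(a,d,c,b)),
    (-1,(b,a,c,d)), (1,(b,a,d,c)), (1,(b,c,a,d)), (-1,(b,c,d,a)), (-1,(b,d,a,c)), (1,(b,d,c,a)),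
    (1,(c,a,b,d)), (-1,(c,a,d,b)), (-1,(c,b,a,d)), (1,(c,b,d,a)), (1,(c,d,a,b)), (-1,(c,d,b,a)),
    (-1,(d,a,b,c)), (1,(d,a,c,b)), (1,(d,b,a,c)), (-1,(d,b,c,a)), (-1,(d,c,a,b)), (1,(d,c,b,a)) ]

/-- The totally antisymmetric symbol ε₄ with value 1 on Λ and vanishing on quadruples
that are not permutations of a quadruple of Λ. -/
def eps4 (a b c d : Fin 8) : ℝ :=
  (((LambdaT.map signedPerms4).flatten).map (fun p => if p.2 = (a,b,c,d) then p.1 else 0)).sum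

/-- Matrix of left multiplication by `e a`: `(Imat a) d c` is the coefficient of `e d` in
`e a * e c`. -/
def Imat (a : Fin 8) : Matrix (Fin 8) (Fin 8) ℝ := Matrix.of fun d c => mulCoef a c d

/-- Octonionic Heisenberg group multiplication on 𝕆 × Im 𝕆 (realized inside 𝕆 × 𝕆):
`(x,t)·(y,s) = (x+y, t+s+2 Im(x ȳ))`. -/
def hmul (p q : Octo × Octo) : Octo × Octo :=
  (p.1 + q.1, p.2 + q.2 + (2:ℝ) • imO (omul p.1 (conjO q.1)))

/-- Group inverse in the octonionic Heisenberg group. -/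
def hinv (p : Octo × Octo) : Octo × Octo := (-p.1, -p.2)

/-- Homogeneous norm ‖(x,t)‖ = (|x|⁴+|t|²)^{1/4}. -/
def hnorm (p : Octo × Octo) : ℝ := ((normSq p.1)^2 + normSq p.2) ^ ((1:ℝ)/4)

/-- The inversion R(x,t) = (−((|x|²e₀ − t)⁻¹)x, −t/(|x|⁴+|t|²)). -/
def Rmap (p : Octo × Octo) : Octo × Octo :=
  (-(omul (oinv (normSq p.1 • e 0 - p.2)) p.1),
   -(((normSq p.1)^2 + normSq p.2)⁻¹ • p.2))

/-- E^β = I_β for β ∈ {1,…,7}, indexed here by `Fin 7` via `β ↦ β+1`. -/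
def E7 (β : Fin 7) : Matrix (Fin 8) (Fin 8) ℝ := Imat β.succ

/-- Octonionic Heisenberg group multiplication in ℝ⁸ × ℝ⁷ coordinates. -/
def hmulC (p q : (Fin 8 → ℝ) × (Fin 7 → ℝ)) : (Fin 8 → ℝ) × (Fin 7 → ℝ) :=
  (p.1 + q.1, fun β => p.2 β + q.2 β + 2 * ∑ a, ∑ b, E7 β a b * p.1 a * q.1 b)

/-- The left-invariant horizontal vector fields
`X_a = ∂/∂x_a + 2 ∑_{β,b} (E^β)_{ba} x_b ∂/∂t_β`. -/
def Xop (a : Fin 8) (f : ((Fin 8 → ℝ) × (Fin 7 → ℝ)) → ℝ)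
    (p : (Fin 8 → ℝ) × (Fin 7 → ℝ)) : ℝ :=
  fderiv ℝ f p ((Pi.single a 1 : Fin 8 → ℝ), (0 : Fin 7 → ℝ))
    + 2 * ∑ β : Fin 7, ∑ b : Fin 8,
        E7 β b a * p.1 b * fderiv ℝ f p ((0 : Fin 8 → ℝ), (Pi.single β 1 : Fin 7 → ℝ))

/-- ρ(x,t) = |x|⁴ + |t|². -/
def rho (p : (Fin 8 → ℝ) × (Fin 7 → ℝ)) : ℝ :=
  (∑ a, (p.1 a)^2)^2 + ∑ β, (p.2 β)^2

set_option maxHeartbeats 2000000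

lemma omul0 (x y : Octo) : omul x y 0 =
    x 0 * y 0 - x 1 * y 1 - x 2 * y 2 - x 3 * y 3 - x 4 * y 4 - x 5 * y 5 - x 6 * y 6 - x 7 * y 7 := by
  simp (config := { decide := true }) [omul, Fin.sum_univ_eight, mulCoef, eps, OmegaT, signedPerms3]
  ring

lemma omul1 (x y : Octo) : omul x y 1 =
    x 0 * y 1 + x 1 * y 0 + x 2 * y 3 - x 3 * y 2 + x 4 * y 7 - x 5 * y 6 + x 6 * y 5 - x 7 * y 4 := by
  simp (config := { decide := true }) [omul, Fin.sum_univ_eight, mulCoef, eps, OmegaT, signedPerms3]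
  ring

lemma omul2 (x y : Octo) : omul x y 2 =
    x 0 * y 2 - x 1 * y 3 + x 2 * y 0 + x 3 * y 1 + x 4 * y 6 + x 5 * y 7 - x 6 * y 4 - x 7 * y 5 := by
  simp (config := { decide := true }) [omul, Fin.sum_univ_eight, mulCoef, eps, OmegaT, signedPerms3]
  ring

lemma omul3 (x y : Octo) : omul x y 3 =
    x 0 * y 3 + x 1 * y 2 - x 2 * y 1 + x 3 * y 0 - x 4 * y 5 + x 5 * y 4 + x 6 * y 7 - x 7 * y 6 := by
  simp (config := { decide := true }) [omul, Fin.sum_univ_eight, mulCoef, eps, OmegaT, signedPerms3]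
  ring

lemma omul4 (x y : Octo) : omul x y 4 =
    x 0 * y 4 - x 1 * y 7 - x 2 * y 6 + x 3 * y 5 + x 4 * y 0 - x 5 * y 3 + x 6 * y 2 + x 7 * y 1 := by
  simp (config := { decide := true }) [omul, Fin.sum_univ_eight, mulCoef, eps, OmegaT, signedPerms3]
  ring

lemma omul5 (x y : Octo) : omul x y 5 =
    x 0 * y 5 + x 1 * y 6 - x 2 * y 7 - x 3 * y 4 + x 4 * y 3 + x 5 * y 0 - x 6 * y 1 + x 7 * y 2 := by
  simp (config := { decide := true }) [omul, Fin.sum_univ_eight, mulCoef, eps, OmegaT, signedPerms3]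
  ring

lemma omul6 (x y : Octo) : omul x y 6 =
    x 0 * y 6 - x 1 * y 5 + x 2 * y 4 - x 3 * y 7 - x 4 * y 2 + x 5 * y 1 + x 6 * y 0 + x 7 * y 3 := by
  simp (config := { decide := true }) [omul, Fin.sum_univ_eight, mulCoef, eps, OmegaT, signedPerms3]
  ring

lemma omul7 (x y : Octo) : omul x y 7 =
    x 0 * y 7 + x 1 * y 4 + x 2 * y 5 + x 3 * y 6 - x 4 * y 1 - x 5 * y 2 - x 6 * y 3 + x 7 * y 0 := by
  simp (config := { decide := true }) [omul, Fin.sum_univ_eight, mulCoef, eps, OmegaT, signedPerms3]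
  ring

lemma octo_ext {u v : Octo} (h0 : u 0 = v 0) (h1 : u 1 = v 1) (h2 : u 2 = v 2)
    (h3 : u 3 = v 3) (h4 : u 4 = v 4) (h5 : u 5 = v 5) (h6 : u 6 = v 6) (h7 : u 7 = v 7) :
    u = v := by
  funext d; fin_cases d <;> assumption

lemma normSq_nonneg (v : Octo) : 0 ≤ normSq v :=
  Finset.sum_nonneg fun a _ => sq_nonneg _

lemma normSq_eq_zero {v : Octo} (h : normSq v = 0) : v = 0 := by
  funext a
  have h1 := (Finset.sum_eq_zero_iff_of_nonneg (fun a _ => sq_nonneg (v a))).mp h a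
    (Finset.mem_univ a)
  have h2 : v a = 0 := by
    have := pow_eq_zero_iff (n := 2) two_ne_zero |>.mp h1
    simpa using this
  simpa using h2

lemma normSq_neg (v : Octo) : normSq (-v) = normSq v := by
  simp [normSq]

lemma normSq_smul (c : ℝ) (v : Octo) : normSq (c • v) = c^2 * normSq v := by
  simp [normSq, Finset.mul_sum, mul_pow]

lemma normSq_conj (v : Octo) : normSq (conjO v) = normSq v := by
  simp (config := { decide := true }) [normSq, conjO, Fin.sum_univ_eight]

lemma conjO_smul (c : ℝ) (v : Octo) : conjO (c • v) = c • conjO v := by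
  apply octo_ext <;>
    simp (config := { decide := true }) [conjO] <;> ring

lemma omul_smul_left (c : ℝ) (x y : Octo) : omul (c • x) y = c • omul x y := by
  apply octo_ext <;>
    simp only [omul0, omul1, omul2, omul3, omul4, omul5, omul6, omul7,
      Pi.smul_apply, smul_eq_mul] <;> ring

lemma omul_smul_right (c : ℝ) (x y : Octo) : omul x (c • y) = c • omul x y := by
  apply octo_ext <;>
    simp only [omul0, omul1, omul2, omul3, omul4, omul5, omul6, omul7,
      Pi.smul_apply, smul_eq_mul] <;> ring

lemma omul_neg_right (x y : Octo) : omul x (-y) = -(omul x y) := by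
  apply octo_ext <;>
    simp only [omul0, omul1, omul2, omul3, omul4, omul5, omul6, omul7,
      Pi.neg_apply] <;> ring

lemma normSq_comp (x y : Octo) : normSq (omul x y) = normSq x * normSq y := by
  simp only [normSq, Fin.sum_univ_eight, omul0, omul1, omul2, omul3, omul4, omul5, omul6, omul7]
  ring

lemma key (q x : Octo) : omul q (omul (conjO q) x) = normSq q • x := by
  apply octo_ext <;>
    simp (config := { decide := true }) only [omul0, omul1, omul2, omul3, omul4, omul5, omul6,
      omul7, conjO, normSq, Fin.sum_univ_eight, Pi.smul_apply, smul_eq_mul,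
      ite_true, ite_false] <;> ring

lemma normSq_sub_mix (c : ℝ) (t : Octo) (h : t 0 = 0) :
    normSq (c • e 0 - t) = c^2 + normSq t := by
  simp (config := { decide := true }) [normSq, Fin.sum_univ_eight, e, h]
  ring

lemma normSq_add_mix (c : ℝ) (t : Octo) (h : t 0 = 0) :
    normSq (c • e 0 + t) = c^2 + normSq t := by
  simp (config := { decide := true }) [normSq, Fin.sum_univ_eight, e, h]
  ring

lemma conjO_sub_mix (c : ℝ) (t : Octo) (h : t 0 = 0) :
    conjO (c • e 0 - t) = c • e 0 + t := by
  apply octo_ext <;>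
    simp (config := { decide := true }) [conjO, e, h]

lemma conjO_add_mix (c : ℝ) (t : Octo) (h : t 0 = 0) :
    conjO (c • e 0 + t) = c • e 0 - t := by
  apply octo_ext <;>
    simp (config := { decide := true }) [conjO, e, h]

lemma oinv_smul (c : ℝ) (hc : c ≠ 0) (v : Octo) : oinv (c • v) = c⁻¹ • oinv v := by
  rw [oinv, oinv, normSq_smul, conjO_smul, smul_smul, smul_smul]
  congr 1
  rcases eq_or_ne (normSq v) 0 with h | h
  · simp [h]
  · field_simp

/-- The inversion R is an involution on ℋ ∖ {(0,0)}. -/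
theorem Rmap_involution (p : Octo × Octo) (hp : p ≠ 0) (him : p.2 0 = 0) :
    Rmap p ≠ 0 ∧ Rmap (Rmap p) = p := by
  obtain ⟨x, t⟩ := p
  have him' : t 0 = 0 := him
  have hr0 : (normSq x)^2 + normSq t ≠ 0 := by
    intro h
    have h1 : (normSq x)^2 = 0 := by nlinarith [normSq_nonneg t, sq_nonneg (normSq x)]
    have hS : normSq x = 0 := pow_eq_zero_iff two_ne_zero |>.mp h1
    have hT : normSq t = 0 := by nlinarith
    apply hp
    rw [normSq_eq_zero hS, normSq_eq_zero hT]
    rfl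
  have hconj : conjO (normSq x • e 0 - t) = normSq x • e 0 + t := conjO_sub_mix _ _ him'
  have key1 : omul (normSq x • e 0 - t) (omul (conjO (normSq x • e 0 - t)) x)
      = ((normSq x)^2 + normSq t) • x := by
    rw [key, normSq_sub_mix _ _ him']
  have hx'd : (Rmap (x, t)).1
      = -(((normSq x)^2 + normSq t)⁻¹ • omul (conjO (normSq x • e 0 - t)) x) := by
    show -(omul (oinv (normSq x • e 0 - t)) x) = _
    rw [oinv, normSq_sub_mix _ _ him', omul_smul_left]
  have ht'd : (Rmap (x, t)).2 = -(((normSq x)^2 + normSq t)⁻¹ • t) := rfl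
  have hS' : normSq (Rmap (x, t)).1 = ((normSq x)^2 + normSq t)⁻¹ * normSq x := by
    rw [hx'd, normSq_neg, normSq_smul, normSq_comp, normSq_conj, normSq_sub_mix _ _ him']
    field_simp
  have hT' : normSq (Rmap (x, t)).2 = (((normSq x)^2 + normSq t)⁻¹)^2 * normSq t := by
    rw [ht'd, normSq_neg, normSq_smul]
  constructor
  · intro h0
    have h1 := hS'; rw [h0] at h1
    have h2 := hT'; rw [h0] at h2
    have hz1 : normSq ((0 : Octo × Octo).1) = 0 := by simp [normSq]
    have hz2 : normSq ((0 : Octo × Octo).2) = 0 := by simp [normSq]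
    rw [hz1] at h1
    rw [hz2] at h2
    have hS : normSq x = 0 := by
      rcases mul_eq_zero.mp h1.symm with h | h
      · exact absurd h (inv_ne_zero hr0)
      · exact h
    have hT : normSq t = 0 := by
      rcases mul_eq_zero.mp h2.symm with h | h
      · exact absurd h (pow_ne_zero 2 (inv_ne_zero hr0))
      · exact h
    apply hp
    rw [normSq_eq_zero hS, normSq_eq_zero hT]
    rfl
  · have ht'0 : (Rmap (x, t)).2 0 = 0 := by rw [ht'd]; simp [him']
    have hr' : (normSq (Rmap (x, t)).1)^2 + normSq (Rmap (x, t)).2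
        = ((normSq x)^2 + normSq t)⁻¹ := by
      rw [hS', hT']
      field_simp
    have hsnd : (Rmap (Rmap (x, t))).2 = t := by
      show -(((normSq (Rmap (x, t)).1)^2 + normSq (Rmap (x, t)).2)⁻¹ • (Rmap (x, t)).2) = t
      rw [hr', ht'd, inv_inv, smul_neg, neg_neg, smul_smul, mul_inv_cancel₀ hr0, one_smul]
    have hq2 : normSq (Rmap (x, t)).1 • e 0 - (Rmap (x, t)).2
        = ((normSq x)^2 + normSq t)⁻¹ • (normSq x • e 0 + t) := by
      rw [hS', ht'd]
      apply octo_ext <;>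
        simp (config := { decide := true }) [e, him'] <;> ring
    have hoinv2 : oinv (((normSq x)^2 + normSq t)⁻¹ • (normSq x • e 0 + t))
        = normSq x • e 0 - t := by
      rw [oinv_smul _ (inv_ne_zero hr0), inv_inv, oinv, normSq_add_mix _ _ him',
        conjO_add_mix _ _ him', smul_smul, mul_inv_cancel₀ hr0, one_smul]
    have hfst : (Rmap (Rmap (x, t))).1 = x := by
      show -(omul (oinv (normSq (Rmap (x, t)).1 • e 0 - (Rmap (x, t)).2)) (Rmap (x, t)).1) = x
      rw [hq2, hoinv2, hx'd, omul_neg_right, neg_neg, omul_smul_right, key1,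
        smul_smul, inv_mul_cancel₀ hr0, one_smul]
    exact Prod.ext_iff.mpr ⟨hfst, hsnd⟩

end OC
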